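/- Let $K \subset \mathbb{R}^2$ be a compact convex body whose support function $h(\vartheta) = \sup_{y \in K} \langle (\cos\vartheta, \sin\vartheta), y \rangle$ is twice continuously differentiable with $h(\vartheta) + h''(\vartheta) > 0$ for all $\vartheta$. Fix $\vartheta_0 \in \mathbb{R}$ and let $i(\vartheta) = h(\vartheta) n_\vartheta - \big(\int_{\vartheta_0}^{\vartheta} h(\tau)\,d\tau - h'(\vartheta_0)\big) t_\vartheta$ be the left involute of $\partial K$ starting at $i(\vartheta_0)$. Then for every $y$ in the interior of $K$, the function $\vartheta \mapsto \|i(\vartheta) - y\|$ is strictly increasing on $[\vartheta_0, \infty)$. -/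

import Mathlib

open Real MeasureTheory

noncomputable def vec2 (a b : ℝ) : EuclideanSpace ℝ (Fin 2) :=
  (WithLp.equiv 2 (Fin 2 → ℝ)).symm ![a, b]

/-- The outer normal direction `n_ϑ = (cos ϑ, sin ϑ)`. -/
noncomputable def nvec (θ : ℝ) : EuclideanSpace ℝ (Fin 2) := vec2 (Real.cos θ) (Real.sin θ)

/-- The tangent direction `t_ϑ = (-sin ϑ, cos ϑ)`. -/
noncomputable def tvec (θ : ℝ) : EuclideanSpace ℝ (Fin 2) := vec2 (-Real.sin θ) (Real.cos θ)

lemma vec2_apply0 (a b : ℝ) : vec2 a b 0 = a := rfl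
lemma vec2_apply1 (a b : ℝ) : vec2 a b 1 = b := rfl

lemma inner_vec2 (a b c d : ℝ) : (inner ℝ (vec2 a b) (vec2 c d) : ℝ) = a * c + b * d := by
  simp [PiLp.inner_apply, Fin.sum_univ_two, vec2_apply0, vec2_apply1]; ring

lemma inner_vec2' (a b : ℝ) (y : EuclideanSpace ℝ (Fin 2)) :
    (inner ℝ (vec2 a b) y : ℝ) = a * y 0 + b * y 1 := by
  simp [PiLp.inner_apply, Fin.sum_univ_two, vec2_apply0, vec2_apply1]; ring

lemma vec2_eq (a b : ℝ) : vec2 a b = a • vec2 1 0 + b • vec2 0 1 := by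
  apply PiLp.ext
  intro j
  fin_cases j <;> simp [vec2_apply0, vec2_apply1, vec2] <;> rfl

lemma hasDerivAt_vec2 {u v : ℝ → ℝ} {u' v' θ : ℝ} (hu : HasDerivAt u u' θ)
    (hv : HasDerivAt v v' θ) :
    HasDerivAt (fun t => vec2 (u t) (v t)) (vec2 u' v') θ := by
  have := (hu.smul_const (vec2 1 0)).add (hv.smul_const (vec2 0 1))
  have e : (fun t => vec2 (u t) (v t)) = (fun y => u y • vec2 1 0) + fun y => v y • vec2 0 1 := by
    funext t; exact vec2_eq _ _
  rw [e, vec2_eq u' v']; exact this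

lemma hasDerivAt_nvec (θ : ℝ) : HasDerivAt nvec (tvec θ) θ := by
  exact hasDerivAt_vec2 (Real.hasDerivAt_cos θ) (Real.hasDerivAt_sin θ)

lemma hasDerivAt_tvec (θ : ℝ) : HasDerivAt tvec (-nvec θ) θ := by
  have h1 := (Real.hasDerivAt_sin θ).neg
  have := hasDerivAt_vec2 h1 (Real.hasDerivAt_cos θ)
  have e : vec2 (-Real.cos θ) (-Real.sin θ) = -nvec θ := by
    apply PiLp.ext; intro j; fin_cases j <;> rfl
  rw [e] at this; exact this

lemma inner_nvec_nvec (θ : ℝ) : (inner ℝ (nvec θ) (nvec θ) : ℝ) = 1 := by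
  simp only [nvec, inner_vec2]; rw [← Real.sin_sq_add_cos_sq θ]; ring

lemma inner_nvec_tvec (θ : ℝ) : (inner ℝ (nvec θ) (tvec θ) : ℝ) = 0 := by
  simp [nvec, tvec, inner_vec2, vec2_apply0, vec2_apply1]; ring

lemma norm_nvec (θ : ℝ) : ‖nvec θ‖ = 1 := by
  have := inner_nvec_nvec θ
  rw [real_inner_self_eq_norm_sq] at this
  nlinarith [norm_nonneg (nvec θ)]


/-- For every `y` in the interior of `K`, the distance
`ϑ ↦ ‖i(ϑ) - y‖` from `y` to the left involute is strictly increasing on `[ϑ₀, ∞)`. -/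
theorem stmt_10 (K : Set (EuclideanSpace ℝ (Fin 2)))
    (hne : K.Nonempty) (hcp : IsCompact K) (hcv : Convex ℝ K)
    (h : ℝ → ℝ)
    (hsupp : ∀ θ : ℝ, IsLUB ((fun y => (inner ℝ (nvec θ) y : ℝ)) '' K) (h θ))
    (hsm : ContDiff ℝ 2 h) (hpos : ∀ θ, 0 < h θ + deriv (deriv h) θ)
    (θ₀ : ℝ) (i : ℝ → EuclideanSpace ℝ (Fin 2))
    (hi : ∀ θ, i θ = h θ • nvec θ - ((∫ τ in θ₀..θ, h τ) - deriv h θ₀) • tvec θ) :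
    ∀ y ∈ interior K, StrictMonoOn (fun θ => ‖i θ - y‖) (Set.Ici θ₀) := by
  intro y hy
  -- strict support inequality for interior points
  have hlt : ∀ θ, (inner ℝ (nvec θ) y : ℝ) < h θ := by
    intro θ
    obtain ⟨ε, hε, hball⟩ := Metric.isOpen_iff.mp isOpen_interior y hy
    have hyK : y + (ε/2) • nvec θ ∈ K := by
      apply interior_subset
      apply hball
      have : dist (y + (ε/2) • nvec θ) y = ε/2 := by
        simp [dist_eq_norm, norm_smul, norm_nvec]
        exact hε.le
      rw [Metric.mem_ball, this]; linarith
    have hub := (hsupp θ).1 ⟨_, hyK, rfl⟩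
    have : (inner ℝ (nvec θ) y : ℝ) + ε/2 ≤ h θ := by
      simpa [inner_add_right, inner_smul_right, inner_nvec_nvec θ, norm_nvec] using hub
    linarith
  set g : ℝ → ℝ := fun θ => (∫ τ in θ₀..θ, h τ) - deriv h θ₀ with hgdef
  have hcont : Continuous h := hsm.continuous
  have hg : ∀ θ, HasDerivAt g (h θ) θ := by
    intro θ
    have := (intervalIntegral.integral_hasDerivAt_right
      (hcont.intervalIntegrable θ₀ θ) (hcont.stronglyMeasurableAtFilter _ _)
      hcont.continuousAt)
    exact this.sub_const _
  have hd1 : Differentiable ℝ h := hsm.differentiable (by norm_num)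
  have hd2 : Differentiable ℝ (deriv h) := by
    have h2 : ContDiff ℝ (1 + 1) h := by norm_num [hsm]
    have : ContDiff ℝ 1 (deriv h) := (contDiff_succ_iff_deriv.mp h2).2.2
    exact this.differentiable (by norm_num)
  set f : ℝ → ℝ := fun θ => deriv h θ + g θ with hfdef
  have hf' : ∀ θ, HasDerivAt f (deriv (deriv h) θ + h θ) θ := fun θ =>
    ((hd2 θ).hasDerivAt).add (hg θ)
  have hfmono : StrictMono f := by
    apply strictMono_of_deriv_pos
    intro θ
    rw [(hf' θ).deriv]
    linarith [hpos θ]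
  have hf0 : f θ₀ = 0 := by simp [hfdef, hgdef]
  have hfpos : ∀ θ, θ₀ < θ → 0 < f θ := fun θ hθ => hf0 ▸ hfmono hθ
  -- derivative of the involute
  have hi' : ∀ θ, HasDerivAt i (f θ • nvec θ) θ := by
    intro θ
    have hieq : i = fun θ => h θ • nvec θ - g θ • tvec θ := funext hi
    rw [hieq]
    have H := (((hd1 θ).hasDerivAt).smul (hasDerivAt_nvec θ)).sub
      ((hg θ).smul (hasDerivAt_tvec θ))
    refine H.congr_deriv ?_
    simp only [hfdef]
    module
  have hinner_i : ∀ θ, (inner ℝ (nvec θ) (i θ) : ℝ) = h θ := by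
    intro θ
    rw [hi θ, inner_sub_right, real_inner_smul_right, real_inner_smul_right,
      inner_nvec_nvec, inner_nvec_tvec]
    ring
  -- derivative of the squared distance
  set q : ℝ → ℝ := fun θ => ‖i θ - y‖^2 with hqdef
  have hq : ∀ θ, HasDerivAt q (2 * (f θ * (h θ - inner ℝ (nvec θ) y))) θ := by
    intro θ
    have hqeq : q = fun θ => (inner ℝ (i θ - y) (i θ - y) : ℝ) :=
      funext fun θ => (real_inner_self_eq_norm_sq _).symm
    rw [hqeq]
    have H := ((hi' θ).sub_const y).inner ℝ ((hi' θ).sub_const y)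
    refine H.congr_deriv ?_
    rw [real_inner_comm (f θ • nvec θ) (i θ - y)]
    simp only [real_inner_smul_left]
    rw [inner_sub_right, hinner_i θ]
    ring
  have hqmono : StrictMonoOn q (Set.Ici θ₀) := by
    apply strictMonoOn_of_deriv_pos (convex_Ici θ₀)
    · exact Continuous.continuousOn (continuous_iff_continuousAt.mpr
        fun θ => (hq θ).differentiableAt.continuousAt)
    · intro θ hθ
      rw [interior_Ici] at hθ
      rw [(hq θ).deriv]
      have h1 := hfpos θ hθ
      have h2 := hlt θ
      have := mul_pos h1 (sub_pos.mpr h2)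
      linarith
  intro a ha b hb hab
  have := hqmono ha hb hab
  simp only [hqdef] at this
  have na := norm_nonneg (i a - y)
  have nb := norm_nonneg (i b - y)
  simp only []
  nlinarith
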